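/- Let T > 0, c ∈ ℝ, and M ≥ 0. Then ∫₀^M [ √(2/(πT))·exp(−(m − cT)²/(2T)) − 2c·e^{2cm}·Φ(−(m + cT)/√T) ] dm = e^{2cM}·( Φ((M + cT)/√T) − 1 ) + Φ((M − cT)/√T), where Φ denotes the standard normal cumulative distribution function Φ(x) = ∫_{−∞}^{x} e^{−u²/2}/√(2π) du. -/

import Mathlib

open Real

/-- The standard normal cumulative distribution function. -/
noncomputable def stdNormalCdf (x : ℝ) : ℝ :=
  ∫ u in Set.Iio x, Real.exp (-u ^ 2 / 2) / Real.sqrt (2 * π)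

noncomputable def stdNormalPdf (u : ℝ) : ℝ := Real.exp (-u ^ 2 / 2) / Real.sqrt (2 * π)

lemma stdNormalPdf_integrable : MeasureTheory.Integrable stdNormalPdf := by
  have h := (integrable_exp_neg_mul_sq (by norm_num : (0:ℝ) < 1/2)).div_const (Real.sqrt (2*π))
  have he : stdNormalPdf = fun u : ℝ => Real.exp (-(1/2) * u ^ 2) / Real.sqrt (2*π) := by
    funext u; unfold stdNormalPdf; ring_nf
  rw [he]; exact h

lemma stdNormalPdf_continuous : Continuous stdNormalPdf := by
  unfold stdNormalPdf; fun_prop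

lemma stdNormalCdf_eq (x : ℝ) :
    stdNormalCdf x = stdNormalCdf 0 + ∫ t in (0:ℝ)..x, stdNormalPdf t := by
  have h : ∀ y : ℝ, stdNormalCdf y = ∫ t in Set.Iic y, stdNormalPdf t := fun y => by
    rw [MeasureTheory.integral_Iic_eq_integral_Iio]; rfl
  rw [h, h, ← intervalIntegral.integral_Iic_sub_Iic
    stdNormalPdf_integrable.integrableOn stdNormalPdf_integrable.integrableOn]
  ring

lemma hasDerivAt_stdNormalCdf (x : ℝ) : HasDerivAt stdNormalCdf (stdNormalPdf x) x := by
  have h : HasDerivAt (fun y => stdNormalCdf 0 + ∫ t in (0:ℝ)..y, stdNormalPdf t)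
      (stdNormalPdf x) x := by
    refine HasDerivAt.const_add _ ?_
    exact intervalIntegral.integral_hasDerivAt_right
      stdNormalPdf_integrable.intervalIntegrable
      (stdNormalPdf_continuous.stronglyMeasurableAtFilter _ _)
      stdNormalPdf_continuous.continuousAt
  exact h.congr_of_eventuallyEq (Filter.Eventually.of_forall fun y => stdNormalCdf_eq y)

lemma stdNormalCdf_total : ∫ u : ℝ, stdNormalPdf u = 1 := by
  unfold stdNormalPdf
  rw [MeasureTheory.integral_div]
  have h : ∀ u : ℝ, Real.exp (-u ^ 2 / 2) = Real.exp (-(1/2) * u ^ 2) := fun u => by ring_nf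
  simp_rw [h, integral_gaussian]
  rw [div_eq_one_iff_eq (by positivity), show π / (1/2) = 2 * π by ring]

lemma stdNormalCdf_neg (x : ℝ) : stdNormalCdf (-x) = 1 - stdNormalCdf x := by
  have hIic : stdNormalCdf (-x) = ∫ t in Set.Iic (-x), stdNormalPdf t := by
    rw [MeasureTheory.integral_Iic_eq_integral_Iio]; rfl
  have heven : (∫ t in Set.Iic (-x), stdNormalPdf t) = ∫ t in Set.Ioi x, stdNormalPdf t := by
    rw [show Set.Ioi x = Set.Ioi (-(-x)) by rw [neg_neg],
      ← integral_comp_neg_Iic (-x) stdNormalPdf]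
    refine MeasureTheory.setIntegral_congr_fun measurableSet_Iic fun t _ => ?_
    unfold stdNormalPdf; ring_nf
  have hsplit : stdNormalCdf x + ∫ t in Set.Ioi x, stdNormalPdf t = 1 := by
    have h := intervalIntegral.integral_Iic_add_Ioi (b := x) (μ := MeasureTheory.volume)
      stdNormalPdf_integrable.integrableOn stdNormalPdf_integrable.integrableOn
    rw [MeasureTheory.integral_Iic_eq_integral_Iio] at h
    rw [show stdNormalCdf x = ∫ t in Set.Iio x, stdNormalPdf t from rfl, h,
      stdNormalCdf_total]
  rw [hIic, heven]; linarith

lemma stdNormalCdf_continuous : Continuous stdNormalCdf :=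
  Differentiable.continuous (fun x => (hasDerivAt_stdNormalCdf x).differentiableAt)

/-- Integrating the density of the running maximum of a Brownian motion with drift c
and unit volatility from 0 to M yields the closed-form CDF. -/
theorem drifted_bm_max_cdf (T c M : ℝ) (hT : 0 < T) (hM : 0 ≤ M) :
    ∫ m in (0 : ℝ)..M,
      (Real.sqrt (2 / (π * T)) * Real.exp (-(m - c * T) ^ 2 / (2 * T))
        - 2 * c * Real.exp (2 * c * m) * stdNormalCdf (-(m + c * T) / Real.sqrt T)) =
    Real.exp (2 * c * M) * (stdNormalCdf ((M + c * T) / Real.sqrt T) - 1)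
      + stdNormalCdf ((M - c * T) / Real.sqrt T) := by
  set sT := Real.sqrt T with hsT_def
  have hsT : 0 < sT := Real.sqrt_pos.mpr hT
  have hsT2 : sT ^ 2 = T := Real.sq_sqrt hT.le
  have h2pi : (0:ℝ) < Real.sqrt (2 * π) := Real.sqrt_pos.mpr (by positivity)
  set F : ℝ → ℝ := fun m =>
    Real.exp (2 * c * m) * (stdNormalCdf ((m + c * T) / sT) - 1)
      + stdNormalCdf ((m - c * T) / sT) with hF_def
  set f : ℝ → ℝ := fun m =>
    Real.sqrt (2 / (π * T)) * Real.exp (-(m - c * T) ^ 2 / (2 * T))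
      - 2 * c * Real.exp (2 * c * m) * stdNormalCdf (-(m + c * T) / sT) with hf_def
  -- key sqrt identity
  have hC : Real.sqrt (2 / (π * T)) = 2 / (Real.sqrt (2 * π) * sT) := by
    rw [eq_div_iff (by positivity)]
    rw [hsT_def, ← Real.sqrt_mul (by positivity), ← Real.sqrt_mul (by positivity)]
    rw [show 2 / (π * T) * (2 * π * T) = 4 by field_simp; ring]
    rw [show (4:ℝ) = 2 ^ 2 by norm_num, Real.sqrt_sq (by norm_num)]
  have hderiv : ∀ m : ℝ, HasDerivAt F (f m) m := by
    intro m
    have h1 : HasDerivAt (fun m : ℝ => 2 * c * m) (2 * c) m := by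
      simpa using (hasDerivAt_id m).const_mul (2 * c)
    have hexp := h1.exp
    have h2 : HasDerivAt (fun m : ℝ => (m + c * T) / sT) (1 / sT) m :=
      ((hasDerivAt_id m).add_const (c * T)).div_const sT
    have h3 : HasDerivAt (fun m : ℝ => stdNormalCdf ((m + c * T) / sT))
        (stdNormalPdf ((m + c * T) / sT) * (1 / sT)) m :=
      (hasDerivAt_stdNormalCdf ((m + c * T) / sT)).comp (h := fun m : ℝ => (m + c * T) / sT) m h2
    have h2' : HasDerivAt (fun m : ℝ => (m - c * T) / sT) (1 / sT) m :=
      ((hasDerivAt_id m).sub_const (c * T)).div_const sT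
    have h3' : HasDerivAt (fun m : ℝ => stdNormalCdf ((m - c * T) / sT))
        (stdNormalPdf ((m - c * T) / sT) * (1 / sT)) m :=
      (hasDerivAt_stdNormalCdf ((m - c * T) / sT)).comp (h := fun m : ℝ => (m - c * T) / sT) m h2'
    have hFderiv := (hexp.mul (h3.sub_const 1)).add h3'
    refine hFderiv.congr_deriv (Eq.symm ?_)
    -- pdf identities
    have hA : Real.exp (2 * c * m) * stdNormalPdf ((m + c * T) / sT)
        = Real.exp (-(m - c * T) ^ 2 / (2 * T)) / Real.sqrt (2 * π) := by
      unfold stdNormalPdf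
      rw [div_pow, hsT2, ← mul_div_assoc, ← Real.exp_add]
      congr 1
      rw [Real.exp_eq_exp]
      field_simp
      ring
    have hB : stdNormalPdf ((m - c * T) / sT)
        = Real.exp (-(m - c * T) ^ 2 / (2 * T)) / Real.sqrt (2 * π) := by
      unfold stdNormalPdf
      rw [div_pow, hsT2]
      congr 2
      rw [neg_div, neg_div, neg_inj, div_div]
      ring
    have hneg : stdNormalCdf (-(m + c * T) / sT)
        = 1 - stdNormalCdf ((m + c * T) / sT) := by
      rw [neg_div, stdNormalCdf_neg]
    rw [hf_def]
    simp only
    rw [hneg, hC]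
    have e1 : Real.exp (2 * c * m) * (stdNormalPdf ((m + c * T) / sT) * (1 / sT))
        = Real.exp (-(m - c * T) ^ 2 / (2 * T)) / Real.sqrt (2 * π) / sT := by
      rw [← mul_assoc, hA]; ring
    rw [e1, hB]
    field_simp
    ring
  have hcont : Continuous f := by
    rw [hf_def]
    apply Continuous.sub
    · fun_prop
    · exact (continuous_const.mul (by fun_prop)).mul
        (stdNormalCdf_continuous.comp (by fun_prop))
  have hFTC := intervalIntegral.integral_eq_sub_of_hasDerivAt
    (f := F) (f' := f) (a := 0) (b := M)
    (fun m _ => hderiv m) (hcont.intervalIntegrable 0 M)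
  have hF0 : F 0 = 0 := by
    rw [hF_def]
    simp only [mul_zero, Real.exp_zero, one_mul, zero_add, zero_sub, neg_div]
    rw [stdNormalCdf_neg]
    ring
  rw [hFTC, hF0, sub_zero, hF_def]
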